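/- For every optimiser a, the expected optimisation time under the uniform needle-in-a-haystack distribution equals (n+1)/2: Σ over the n NIAH functions f of (1/n) · M_ptm(T^y(a,f)) = (n+1)/2. -/

import Mathlib

namespace NFL

/-- A (deterministic) optimiser on search space `Fin n` and range `Y`:
it assigns to every trace (list of pairs with pairwise distinct first
components) of length `< n` a next, unvisited search point. -/
structure Optimiser (n : ℕ) (Y : Type*) where
  next : List (Fin n × Y) → Fin n
  valid : ∀ T : List (Fin n × Y), T.length < n → (T.map Prod.fst).Nodup →
    next T ∉ T.map Prod.fst

variable {n : ℕ} {Y : Type*}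

/-- The trace generated after `k` steps by running optimiser `a`
on target function `f`, starting from the empty trace. -/
def runFrom (a : Optimiser n Y) (f : Fin n → Y) : ℕ → List (Fin n × Y)
  | 0 => []
  | k + 1 =>
      runFrom a f k ++ [(a.next (runFrom a f k), f (a.next (runFrom a f k)))]

/-- The result vector `T^y(a,f)`: its `i`-th entry (0-indexed) is the value
observed at step `i+1`, i.e. `f` applied to the point probed after `i` steps. -/
def resVec (a : Optimiser n Y) (f : Fin n → Y) (i : Fin n) : Y :=
  f (a.next (runFrom a f (i : ℕ)))

/-- A problem distribution: a probability distribution on `Y^X`. -/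
def IsProbDist [Fintype Y] (P : (Fin n → Y) → ℝ) : Prop :=
  (∀ f, 0 ≤ P f) ∧ ∑ f, P f = 1

/-- `P_a(R)`: the probability that optimiser `a` produces result vector `R`. -/
def resProb [Fintype Y] [DecidableEq Y] (P : (Fin n → Y) → ℝ)
    (a : Optimiser n Y) (R : Fin n → Y) : ℝ :=
  ∑ f ∈ Finset.univ.filter (fun f => resVec a f = R), P f

/-- Expected performance `M^P(a)` of optimiser `a` under distribution `P`
and performance measure `M`. -/
def perf [Fintype Y] (P : (Fin n → Y) → ℝ) (M : (Fin n → Y) → ℝ)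
    (a : Optimiser n Y) : ℝ :=
  ∑ f, P f * M (resVec a f)

/-- NFL holds for `P`: all optimisers have the same expected performance
under every (nonnegative) performance measure. -/
def NFLholds [Fintype Y] (P : (Fin n → Y) → ℝ) : Prop :=
  ∀ M : (Fin n → Y) → ℝ, (∀ R, 0 ≤ M R) →
    ∀ a b : Optimiser n Y, perf P M a = perf P M b

/-- The histogram of `f`: `h_f(y) = |f⁻¹(y)|`. -/
def histogram [DecidableEq Y] (f : Fin n → Y) (y : Y) : ℕ :=
  (Finset.univ.filter fun x => f x = y).card

/-- `P` is block uniform: functions with equal histograms get equal probability. -/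
def BlockUniform [DecidableEq Y] (P : (Fin n → Y) → ℝ) : Prop :=
  ∀ f g : Fin n → Y, histogram f = histogram g → P f = P g

/-- `F` is closed under permutation: `f ∈ F` implies `σf ∈ F`,
where `(σf)(x) = f(σ⁻¹(x))`. -/
def Cup [Fintype Y] [DecidableEq Y] (F : Finset (Fin n → Y)) : Prop :=
  ∀ f ∈ F, ∀ σ : Equiv.Perm (Fin n), (f ∘ σ.symm) ∈ F

/-- The uniform distribution on a class `F`. -/
noncomputable def uniformOn [Fintype Y] [DecidableEq Y] (F : Finset (Fin n → Y))
    (f : Fin n → Y) : ℝ :=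
  if f ∈ F then 1 / F.card else 0

/-- An optimiser is non-adaptive if it probes the points of `X` in a fixed
order, regardless of the observed values. -/
def NonAdaptive (a : Optimiser n Y) : Prop :=
  ∃ ord : Fin n → Fin n,
    ∀ (f : Fin n → Y) (i : Fin n), a.next (runFrom a f (i : ℕ)) = ord i

/-- Optimisation time `M_ptm(R)`: the least index `i` (counting from 1) with
`R[i] = yMax`, with the convention `M_ptm(R) = n` if no such index exists. -/
def mptm [DecidableEq Y] (yMax : Y) (R : Fin n → Y) : ℕ :=
  if h : ∃ i, R i = yMax then
    ((Finset.univ.filter fun i => R i = yMax).min'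
      ⟨h.choose, Finset.mem_filter.mpr ⟨Finset.mem_univ _, h.choose_spec⟩⟩).val + 1
  else n

section Aux

variable {n : ℕ} {Y : Type*}

lemma runFrom_length (a : Optimiser n Y) (f : Fin n → Y) (k : ℕ) :
    (runFrom a f k).length = k := by
  induction k with
  | zero => rfl
  | succ k ih => simp [runFrom, ih]

lemma runFrom_map_fst (a : Optimiser n Y) (f : Fin n → Y) (k : ℕ) :
    (runFrom a f k).map Prod.fst
      = (List.range k).map (fun i => a.next (runFrom a f i)) := by
  induction k with
  | zero => rfl
  | succ k ih => simp [runFrom, List.range_succ, ih]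

lemma runFrom_nodup (a : Optimiser n Y) (f : Fin n → Y) (k : ℕ) (hk : k ≤ n) :
    ((runFrom a f k).map Prod.fst).Nodup := by
  induction k with
  | zero => simp [runFrom]
  | succ k ih =>
    have hk' : k ≤ n := Nat.le_of_succ_le hk
    have hlen : (runFrom a f k).length < n := by rw [runFrom_length]; omega
    have hnotin := a.valid _ hlen (ih hk')
    simp only [runFrom, List.map_append, List.map_cons, List.map_nil]
    exact List.Nodup.append (ih hk') (List.nodup_singleton _)
      (by simpa [List.disjoint_singleton] using hnotin)

lemma next_injective (a : Optimiser n Y) (f : Fin n → Y) {i j : ℕ}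
    (hij : i < j) (hj : j < n) :
    a.next (runFrom a f i) ≠ a.next (runFrom a f j) := by
  intro h
  have hlen : (runFrom a f j).length < n := by rw [runFrom_length]; omega
  have hnotin := a.valid _ hlen (runFrom_nodup a f j (le_of_lt hj))
  apply hnotin
  rw [runFrom_map_fst]
  exact List.mem_map.mpr ⟨i, List.mem_range.mpr hij, h⟩

lemma mptm_eq (R : Fin n → Bool) (k : Fin n) (hk : R k = true)
    (hmin : ∀ i, R i = true → k ≤ i) : mptm true R = (k : ℕ) + 1 := by
  have h : ∃ i, R i = true := ⟨k, hk⟩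
  rw [mptm, dif_pos h]
  congr 1
  have hkmem : k ∈ Finset.univ.filter (fun i => R i = true) :=
    Finset.mem_filter.mpr ⟨Finset.mem_univ _, hk⟩
  have h1 := Finset.min'_le _ k hkmem
  have h2 : k ≤ (Finset.univ.filter (fun i => R i = true)).min' ⟨k, hkmem⟩ :=
    Finset.le_min' _ _ _ (fun i hi => hmin i (Finset.mem_filter.mp hi).2)
  have := le_antisymm h1 h2
  rw [this]

lemma gauss_sum (n : ℕ) :
    ∑ i ∈ Finset.range n, ((i : ℝ) + 1) = (n : ℝ) * ((n : ℝ) + 1) / 2 := by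
  induction n with
  | zero => simp
  | succ m ih =>
    rw [Finset.sum_range_succ, ih]
    push_cast
    ring

end Aux

theorem niah_expected_optimisation_time {n : ℕ} (hn : 1 ≤ n)
    (a : Optimiser n Bool) :
    ∑ f ∈ Finset.univ.filter
        (fun f : Fin n → Bool => (Finset.univ.filter fun x => f x = true).card = 1),
      (1 / (n : ℝ)) * (mptm true (resVec a f) : ℝ) = ((n : ℝ) + 1) / 2 := by
  classical
  -- the needle functions
  set g : Fin n → (Fin n → Bool) := fun x y => decide (y = x) with hg
  have hginj : Function.Injective g := by
    intro x x' h
    have := congrFun h x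
    simp [hg] at this
    exact this
  -- the filter set is the image of g
  have hset : (Finset.univ.filter
      (fun f : Fin n → Bool => (Finset.univ.filter fun x => f x = true).card = 1))
      = Finset.univ.image g := by
    ext f
    simp only [Finset.mem_filter, Finset.mem_univ, true_and, Finset.mem_image]
    constructor
    · intro hcard
      obtain ⟨x, hx⟩ := Finset.card_eq_one.mp hcard
      refine ⟨x, ?_⟩
      funext y
      have hmem : f y = true ↔ y = x := by
        constructor
        · intro h
          have : y ∈ ({x} : Finset (Fin n)) :=
            hx ▸ (Finset.mem_filter.mpr ⟨Finset.mem_univ _, h⟩)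
          simpa using this
        · intro h
          subst h
          have : y ∈ Finset.filter (fun z => f z = true) Finset.univ :=
            hx ▸ Finset.mem_singleton_self y
          exact (Finset.mem_filter.mp this).2
      by_cases hyx : y = x
      · simp [hg, hyx]
        exact hyx ▸ hmem.mpr hyx
      · simp only [hg, decide_eq_false hyx]
        exact ((Bool.eq_false_iff).mpr (fun h => hyx (hmem.mp h))).symm
    · rintro ⟨x, rfl⟩
      have : (Finset.univ.filter fun y => g x y = true) = {x} := by
        ext y; simp [hg]
      rw [this, Finset.card_singleton]
  rw [hset, Finset.sum_image (fun x _ y _ h => hginj h)]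
  -- the probing order on the all-false function
  set f₀ : Fin n → Bool := fun _ => false with hf₀
  set ord : Fin n → Fin n := fun i => a.next (runFrom a f₀ (i : ℕ)) with hord
  have hordinj : Function.Injective ord := by
    intro i j h
    by_contra hne
    rcases Ne.lt_or_gt (fun h' : (i:ℕ) = (j:ℕ) => hne (Fin.ext h')) with hlt | hlt
    · exact next_injective a f₀ hlt j.isLt h
    · exact next_injective a f₀ hlt i.isLt h.symm
  -- run on needle g (ord k) coincides with run on f₀ up to step k
  have hrun : ∀ (k : Fin n) (j : ℕ), j ≤ (k : ℕ) →
      runFrom a (g (ord k)) j = runFrom a f₀ j := by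
    intro k j hj
    induction j with
    | zero => rfl
    | succ j ih =>
      have hj' : j ≤ (k : ℕ) := Nat.le_of_succ_le hj
      have hR := ih hj'
      have hne : a.next (runFrom a f₀ j) ≠ ord k := by
        exact next_injective a f₀ hj k.isLt
      simp only [runFrom, hR]
      congr 2
      simp [hg, hne]
      rfl
  have hres : ∀ (k : Fin n) (i : Fin n),
      resVec a (g (ord k)) i = decide (i = k) := by
    intro k i
    rcases lt_trichotomy (i : ℕ) (k : ℕ) with hlt | heq | hgt
    · rw [resVec, hrun k i (le_of_lt hlt)]
      have hne : a.next (runFrom a f₀ (i : ℕ)) ≠ ord k :=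
        next_injective a f₀ hlt k.isLt
      have : (i : Fin n) ≠ k := fun h => by simp [h] at hlt
      simp [hg, hne, this]
    · have : i = k := Fin.ext heq
      subst this
      rw [resVec, hrun i i le_rfl]
      simp [hg, hord]
    · rw [resVec]
      have hne : a.next (runFrom a (g (ord k)) (i : ℕ)) ≠ ord k := by
        intro h
        have hk' : a.next (runFrom a (g (ord k)) (k : ℕ)) = ord k := by
          rw [hrun k k le_rfl]
        exact next_injective a (g (ord k)) hgt i.isLt (hk'.trans h.symm)
      have : (i : Fin n) ≠ k := fun h => by simp [h] at hgt
      simp only [hg] at hne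
      simp [hg, hne, this]
  have hmptm : ∀ k : Fin n, mptm true (resVec a (g (ord k))) = (k : ℕ) + 1 := by
    intro k
    apply mptm_eq
    · rw [hres]; simp
    · intro i hi
      rw [hres] at hi
      simp at hi
      exact le_of_eq hi.symm
  -- reindex the sum via the bijection ord
  have hordbij : Function.Bijective ord :=
    ⟨hordinj, Finite.surjective_of_injective hordinj⟩
  let e : Fin n ≃ Fin n := Equiv.ofBijective ord hordbij
  have hsum : ∑ x : Fin n, (1 / (n : ℝ)) * (mptm true (resVec a (g x)) : ℝ)
      = ∑ k : Fin n, (1 / (n : ℝ)) * ((k : ℕ) + 1 : ℝ) := by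
    rw [← Equiv.sum_comp e (fun x => (1 / (n : ℝ)) * (mptm true (resVec a (g x)) : ℝ))]
    refine Finset.sum_congr rfl fun k _ => ?_
    have : e k = ord k := rfl
    rw [this, hmptm]
    push_cast
    ring
  rw [hsum, ← Finset.mul_sum]
  rw [Fin.sum_univ_eq_sum_range (fun k => ((k : ℕ) + 1 : ℝ)), gauss_sum]
  have hn0 : (n : ℝ) ≠ 0 := by positivity
  field_simp

end NFL
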